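/- A linear map Φ from m×m matrices to n×n matrices is completely positive if and only if its Choi matrix Φ_μ = Σ_{i,k} Φ(|i⟩⟨k|) ⊗ |i⟩⟨k| (an nm×nm block matrix with blocks Φ(|i⟩⟨k|)) is positive semidefinite. -/

import Mathlib

open Matrix Kronecker
open scoped ComplexOrder

open scoped Classical in
/-- Positive semidefinite square root (zero if the matrix is not PSD). -/
noncomputable def psqrt {n : Type*} [Fintype n] [DecidableEq n] (A : Matrix n n ℂ) : Matrix n n ℂ :=
  if h : A.PosSemidef then
    h.1.eigenvectorUnitary.1 * diagonal ((↑) ∘ (√·) ∘ h.1.eigenvalues) *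
      (star h.1.eigenvectorUnitary : Matrix n n ℂ) else 0

/-- Matrix absolute value `|A| = √(Aᴴ A)`. -/
noncomputable def matAbs {n : Type*} [Fintype n] [DecidableEq n] (A : Matrix n n ℂ) : Matrix n n ℂ :=
  psqrt (Aᴴ * A)

/-- Ampliation `id_k ⊗ Φ` of a linear map on matrices, acting blockwise. -/
def amp {m n : Type*} (Φ : Matrix m m ℂ →ₗ[ℂ] Matrix n n ℂ) {k : Type*}
    (M : Matrix (k × m) (k × m) ℂ) : Matrix (k × n) (k × n) ℂ :=
  Matrix.of fun p q => Φ (Matrix.of fun a b => M (p.1, a) (q.1, b)) p.2 q.2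

/-- The Choi matrix of `Φ`, with blocks `Φ(E_{ik})`. -/
noncomputable def choi {m n : Type*} [DecidableEq m]
    (Φ : Matrix m m ℂ →ₗ[ℂ] Matrix n n ℂ) : Matrix (n × m) (n × m) ℂ :=
  Matrix.of fun p q => Φ (Matrix.single p.2 q.2 1) p.1 q.1

lemma phi_apply_choi {m n : Type*} [Fintype m] [DecidableEq m]
    (Φ : Matrix m m ℂ →ₗ[ℂ] Matrix n n ℂ) (A : Matrix m m ℂ) (x y : n) :
    Φ A x y = ∑ i, ∑ j, A i j * choi Φ (x, i) (y, j) := by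
  conv_lhs => rw [matrix_eq_sum_single A]
  simp only [map_sum, Matrix.sum_apply]
  refine Finset.sum_congr rfl fun i _ => Finset.sum_congr rfl fun j _ => ?_
  have : Matrix.single i j (A i j) = A i j • Matrix.single i j (1:ℂ) := by
    rw [Matrix.smul_single, smul_eq_mul, mul_one]
  rw [this, _root_.map_smul]
  simp [choi]

lemma sum_swap4 {ι₁ ι₂ ι₃ ι₄ : Type*} [Fintype ι₁] [Fintype ι₂] [Fintype ι₃] [Fintype ι₄]
    (f : ι₁ → ι₂ → ι₃ → ι₄ → ℂ) :
    ∑ a, ∑ b, ∑ c, ∑ d, f a b c d = ∑ c, ∑ d, ∑ a, ∑ b, f a b c d := by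
  trans ∑ p : ι₁ × ι₂, ∑ q : ι₃ × ι₄, f p.1 p.2 q.1 q.2
  · simp [Fintype.sum_prod_type]
  · rw [Finset.sum_comm]
    simp [Fintype.sum_prod_type]

lemma psd_sqrt_exists {n : Type*} [Fintype n] [DecidableEq n] {A : Matrix n n ℂ}
    (hA : A.PosSemidef) : ∃ C : Matrix n n ℂ, C.PosSemidef ∧ C * C = A := by
  open scoped MatrixOrder in
  exact ⟨CFC.sqrt A, Matrix.nonneg_iff_posSemidef.mp (CFC.sqrt_nonneg A),
    CFC.sqrt_mul_sqrt_self A (Matrix.nonneg_iff_posSemidef.mpr hA)⟩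

theorem choi_theorem {m n : Type*} [Fintype m] [DecidableEq m] [Fintype n] [DecidableEq n]
    (Φ : Matrix m m ℂ →ₗ[ℂ] Matrix n n ℂ) :
    (∀ k : ℕ, ∀ M : Matrix (Fin k × m) (Fin k × m) ℂ, M.PosSemidef → (amp Φ M).PosSemidef) ↔
      (choi Φ).PosSemidef := by
  constructor
  · intro h
    set k := Fintype.card m with hk
    let e := Fintype.equivFin m
    let w : Fin k × m → ℂ := fun p => if e p.2 = p.1 then 1 else 0
    let M : Matrix (Fin k × m) (Fin k × m) ℂ := Matrix.of fun p q => star (w p) * w q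
    have hM : M.PosSemidef := by
      have hMe : M = (Matrix.of fun (_ : Unit) p => w p)ᴴ * Matrix.of fun (_ : Unit) p => w p := by
        ext p q
        simp [M, Matrix.mul_apply, Matrix.conjTranspose_apply]
      rw [hMe]
      exact Matrix.posSemidef_conjTranspose_mul_self _
    have hamp := h k M hM
    have key : choi Φ = (amp Φ M).submatrix (fun p : n × m => (e p.2, p.1))
        (fun p : n × m => (e p.2, p.1)) := by
      ext p q
      simp only [Matrix.submatrix_apply, amp, Matrix.of_apply, choi]
      have harg : (Matrix.of fun a b => M ((e p.2, p.1).1, a) ((e q.2, q.1).1, b))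
          = Matrix.single p.2 q.2 (1:ℂ) := by
        ext i j
        simp only [Matrix.of_apply, M, w, Matrix.single, star_one, star_zero,
          e.injective.eq_iff]
        by_cases h1 : p.2 = i <;> by_cases h2 : q.2 = j <;> simp [h1, h2] <;>
          first
          | exact fun hh => h1 hh.symm
          | exact fun hh => h2 hh.symm
          | exact fun _ hh => h1 hh.symm
      rw [harg]
    rw [key]
    exact hamp.submatrix _
  · intro hc k M hM
    obtain ⟨C, hCps, hCC⟩ := psd_sqrt_exists hc
    have hchoi : ∀ a b, choi Φ a b = ∑ r, star (C r a) * C r b := by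
      intro a b
      have : choi Φ = C * C := hCC.symm
      rw [this, Matrix.mul_apply]
      exact Finset.sum_congr rfl fun r _ => by rw [hCps.isHermitian.apply]
    obtain ⟨S, hSps, hSS⟩ := psd_sqrt_exists hM
    have hMab : ∀ a b, M a b = ∑ s, star (S s a) * S s b := by
      intro a b
      have : M = S * S := hSS.symm
      rw [this, Matrix.mul_apply]
      exact Finset.sum_congr rfl fun s _ => by rw [hSps.isHermitian.apply]
    let X : Matrix ((n × m) × (Fin k × m)) (Fin k × n) ℂ :=
      Matrix.of fun rs qy => ∑ j, S rs.2 (qy.1, j) * C rs.1 (qy.2, j)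
    have key : amp Φ M = Xᴴ * X := by
      ext p q
      rw [Matrix.mul_apply]
      show Φ (Matrix.of fun a b => M (p.1, a) (q.1, b)) p.2 q.2 = _
      rw [phi_apply_choi]
      simp only [Matrix.of_apply, hMab, hchoi, Matrix.conjTranspose_apply, X,
        Matrix.of_apply, star_sum, star_mul', Finset.sum_mul_sum]
      rw [Fintype.sum_prod_type]
      rw [sum_swap4 fun a b c d =>
        star (S c (p.1, a)) * S c (q.1, b) * (star (C d (p.2, a)) * C d (q.2, b))]
      rw [Finset.sum_comm]
      refine Finset.sum_congr rfl fun r _ => Finset.sum_congr rfl fun s _ =>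
        Finset.sum_congr rfl fun i _ => Finset.sum_congr rfl fun j _ => ?_
      ring
    rw [key]
    exact Matrix.posSemidef_conjTranspose_mul_self X
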